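/- arXiv:0805.3672 — 3 statements merged into one kernel-verified Lean document; each statement's English description precedes it below -/
import Mathlib

section
/- A linear idempotent map P on the polynomial ring C[x_1,...,x_d] has kernel an ideal if and only if P(gh) = P(g·P(h)) for all polynomials g and h. -/
/-- de Boor's formula: a linear idempotent map `P` on `ℂ[x₁,…,x_d]` has kernel an ideal
(i.e. the kernel is closed under multiplication by arbitrary polynomials) if and only if
`P (g * h) = P (g * P h)` for all polynomials `g h`. -/
theorem stmt_0 (d : ℕ)
    (P : MvPolynomial (Fin d) ℂ →ₗ[ℂ] MvPolynomial (Fin d) ℂ)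
    (hidem : P ∘ₗ P = P) :
    (∀ g h : MvPolynomial (Fin d) ℂ, P h = 0 → P (g * h) = 0) ↔
      ∀ g h : MvPolynomial (Fin d) ℂ, P (g * h) = P (g * P h) := by
  have hPP : ∀ p, P (P p) = P p := fun p => congrFun (congrArg DFunLike.coe hidem) p
  constructor
  · intro hker g h
    have hk : P (h - P h) = 0 := by rw [map_sub, hPP, sub_self]
    have := hker g (h - P h) hk
    rw [mul_sub, map_sub, sub_eq_zero] at this
    exact this
  · intro hform g h hh
    rw [hform g h, hh, mul_zero, map_zero]
end

section
/- If P_1 and P_2 are two ideal projectors from C[x_1,...,x_d] onto the span of {1, x_1, ..., x_d} satisfying P_1(x_i x_j) = P_2(x_i x_j) for all 1 ≤ i, j ≤ d, then P_1 = P_2. -/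
open MvPolynomial

/-- Two ideal projectors from `ℂ[x₁,…,x_d]` onto the span of `{1, x₁, …, x_d}` which agree on
all products `x_i x_j` are equal. -/
theorem stmt_2 (d : ℕ)
    (P₁ P₂ : MvPolynomial (Fin d) ℂ →ₗ[ℂ] MvPolynomial (Fin d) ℂ)
    (hidem₁ : P₁ ∘ₗ P₁ = P₁) (hidem₂ : P₂ ∘ₗ P₂ = P₂)
    (hker₁ : ∀ g h : MvPolynomial (Fin d) ℂ, P₁ h = 0 → P₁ (g * h) = 0)
    (hker₂ : ∀ g h : MvPolynomial (Fin d) ℂ, P₂ h = 0 → P₂ (g * h) = 0)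
    (hrange₁ : LinearMap.range P₁ =
      Submodule.span ℂ ({1} ∪ Set.range (X : Fin d → MvPolynomial (Fin d) ℂ)))
    (hrange₂ : LinearMap.range P₂ =
      Submodule.span ℂ ({1} ∪ Set.range (X : Fin d → MvPolynomial (Fin d) ℂ)))
    (hagree : ∀ i j : Fin d, P₁ (X i * X j) = P₂ (X i * X j)) :
    P₁ = P₂ := by
  set S := Submodule.span ℂ ({1} ∪ Set.range (X : Fin d → MvPolynomial (Fin d) ℂ)) with hS
  -- P₁ and P₂ fix elements of the common range S
  have fix₁ : ∀ y ∈ S, P₁ y = y := by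
    intro y hy
    rw [← hrange₁] at hy
    obtain ⟨x, rfl⟩ := hy
    exact LinearMap.congr_fun hidem₁ x
  have fix₂ : ∀ y ∈ S, P₂ y = y := by
    intro y hy
    rw [← hrange₂] at hy
    obtain ⟨x, rfl⟩ := hy
    exact LinearMap.congr_fun hidem₂ x
  have hone : (1 : MvPolynomial (Fin d) ℂ) ∈ S :=
    Submodule.subset_span (Set.mem_union_left _ rfl)
  have hX : ∀ i, (X i : MvPolynomial (Fin d) ℂ) ∈ S := fun i =>
    Submodule.subset_span (Set.mem_union_right _ ⟨i, rfl⟩)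
  -- P₁ and P₂ agree on X i * r for r ∈ S
  have key : ∀ r ∈ S, ∀ i, P₁ (X i * r) = P₂ (X i * r) := by
    intro r hr
    induction hr using Submodule.span_induction with
    | mem y hy =>
      intro i
      rcases hy with hy | ⟨j, rfl⟩
      · simp only [Set.mem_singleton_iff] at hy
        subst hy
        rw [mul_one, fix₁ _ (hX i), fix₂ _ (hX i)]
      · exact hagree i j
    | zero => intro i; simp
    | add y z _ _ hy hz => intro i; rw [mul_add, map_add, map_add, hy i, hz i]
    | smul c y _ hy => intro i; rw [mul_smul_comm, map_smul, map_smul, hy i]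
  -- reduce P (X i * p) to P (X i * P p)
  have red₁ : ∀ (p : MvPolynomial (Fin d) ℂ) (i : Fin d),
      P₁ (X i * p) = P₁ (X i * P₁ p) := by
    intro p i
    have h0 : P₁ (p - P₁ p) = 0 := by
      rw [map_sub, sub_eq_zero]; exact (LinearMap.congr_fun hidem₁ p).symm
    have := hker₁ (X i) _ h0
    rw [mul_sub, map_sub, sub_eq_zero] at this
    exact this
  have red₂ : ∀ (p : MvPolynomial (Fin d) ℂ) (i : Fin d),
      P₂ (X i * p) = P₂ (X i * P₂ p) := by
    intro p i
    have h0 : P₂ (p - P₂ p) = 0 := by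
      rw [map_sub, sub_eq_zero]; exact (LinearMap.congr_fun hidem₂ p).symm
    have := hker₂ (X i) _ h0
    rw [mul_sub, map_sub, sub_eq_zero] at this
    exact this
  apply LinearMap.ext
  intro p
  induction p using MvPolynomial.induction_on with
  | C a =>
    have ha : (C a : MvPolynomial (Fin d) ℂ) ∈ S := by
      have : (C a : MvPolynomial (Fin d) ℂ) = a • 1 := by
        rw [smul_eq_C_mul, mul_one]
      rw [this]
      exact S.smul_mem a hone
    rw [fix₁ _ ha, fix₂ _ ha]
  | add p q hp hq => rw [map_add, map_add, hp, hq]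
  | mul_X p i hp =>
    rw [mul_comm, red₁, red₂, hp]
    have hmem : P₂ p ∈ S := by rw [← hrange₂]; exact ⟨p, rfl⟩
    exact key _ hmem i
end

section
/- The element C(0;j,(i,k)) = Σ_{m=1}^d (p_{m,ij} p_{0,km} − p_{m,kj} p_{0,im}) lies in the ideal generated by the elements C(a;b,(e,f)) with 1 ≤ a,b,e,f ≤ d, where for a ∉ {e,f,b}, C(a;b,(e,f)) = Σ_{m} (p_{m,eb} p_{a,fm} − p_{m,fb} p_{a,em}), and appropriate linear terms p_{0,··} are included when a ∈ {e,f,b}. -/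
open MvPolynomial

variable {A : Type} [CommRing A]

/-- `P(x_i x_j) = p_{0,ij} + ∑_m p_{m,ij} x_m`, as a polynomial in `x₁,…,x_d` with
coefficients in the ring `A` containing the (symmetric) elements `p₀`, `p`. -/
noncomputable def PXX (d : ℕ) (p0 : Fin d → Fin d → A) (p : Fin d → Fin d → Fin d → A)
    (i j : Fin d) : MvPolynomial (Fin d) A :=
  C (p0 i j) + ∑ m : Fin d, C (p m i j) * X m

/-- `P(x_k · q)` for a polynomial `q` of degree at most one: `P` fixes constants and the `x_m`,
and sends `x_k x_m` to `P(x_k x_m)`. -/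
noncomputable def Papp (d : ℕ) (p0 : Fin d → Fin d → A) (p : Fin d → Fin d → Fin d → A)
    (k : Fin d) (q : MvPolynomial (Fin d) A) : MvPolynomial (Fin d) A :=
  C (q.coeff 0) * X k + ∑ m : Fin d, C (q.coeff (Finsupp.single m 1)) * PXX d p0 p k m

/-- The polynomial `P(x_k P(x_i x_j)) − P(x_i P(x_k x_j))`. -/
noncomputable def Dpoly (d : ℕ) (p0 : Fin d → Fin d → A) (p : Fin d → Fin d → Fin d → A)
    (j i k : Fin d) : MvPolynomial (Fin d) A :=
  Papp d p0 p k (PXX d p0 p i j) - Papp d p0 p i (PXX d p0 p k j)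

/-- `C(a;j,(i,k))`, the coefficient of `x_a` in `P(x_k P(x_i x_j)) − P(x_i P(x_k x_j))`. -/
noncomputable def Ccoef (d : ℕ) (p0 : Fin d → Fin d → A) (p : Fin d → Fin d → Fin d → A)
    (a j i k : Fin d) : A :=
  (Dpoly d p0 p j i k).coeff (Finsupp.single a 1)

/-- `C(0;j,(i,k))`, the constant coefficient of `P(x_k P(x_i x_j)) − P(x_i P(x_k x_j))`. -/
noncomputable def Cconst (d : ℕ) (p0 : Fin d → Fin d → A) (p : Fin d → Fin d → Fin d → A)
    (j i k : Fin d) : A :=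
  (Dpoly d p0 p j i k).coeff 0

lemma PXX_coeff_zero (d : ℕ) (p0 : Fin d → Fin d → A) (p : Fin d → Fin d → Fin d → A)
    (i j : Fin d) : (PXX d p0 p i j).coeff 0 = p0 i j := by
  simp [PXX, coeff_sum, coeff_C_mul]

lemma PXX_coeff_single (d : ℕ) (p0 : Fin d → Fin d → A) (p : Fin d → Fin d → Fin d → A)
    (i j a : Fin d) : (PXX d p0 p i j).coeff (Finsupp.single a 1) = p a i j := by
  have h0 : ¬ ((0 : Fin d →₀ ℕ) = Finsupp.single a 1) := fun h => by
    simpa [Finsupp.single_eq_zero] using h.symm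
  simp [PXX, coeff_sum, coeff_C_mul, coeff_X', Finsupp.single_eq_single_iff, coeff_C, h0]

lemma Cconst_eq (d : ℕ) (p0 : Fin d → Fin d → A) (p : Fin d → Fin d → Fin d → A)
    (j i k : Fin d) :
    Cconst d p0 p j i k = ∑ m, p m i j * p0 k m - ∑ m, p m k j * p0 i m := by
  simp [Cconst, Dpoly, Papp, coeff_sum, coeff_C_mul, PXX_coeff_zero, PXX_coeff_single]

lemma Ccoef_eq (d : ℕ) (p0 : Fin d → Fin d → A) (p : Fin d → Fin d → Fin d → A)
    (a b e f : Fin d) :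
    Ccoef d p0 p a b e f =
      ((if a = f then p0 e b else 0) + ∑ m, p m e b * p a f m)
      - ((if a = e then p0 f b else 0) + ∑ m, p m f b * p a e m) := by
  simp [Ccoef, Dpoly, Papp, coeff_sum, coeff_C_mul, PXX_coeff_zero, PXX_coeff_single,
    coeff_X', Finsupp.single_eq_single_iff, mul_ite, mul_one, mul_zero, eq_comm (a := a)]

lemma key (d : ℕ) (p0 : Fin d → Fin d → A) (p : Fin d → Fin d → Fin d → A)
    (hp0 : ∀ i j, p0 i j = p0 j i) (hp : ∀ r s t, p r s t = p r t s)
    (j i k l : Fin d) (hl : l ≠ i) :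
    Cconst d p0 p j i k =
      ∑ m, p m i j * Ccoef d p0 p l k m l
    - ∑ m, p m j k * Ccoef d p0 p l m i l
    + ∑ m, p m k l * Ccoef d p0 p l j i m
    - ∑ a, p l i a * Ccoef d p0 p a k j l
    - ∑ a, p l a l * Ccoef d p0 p a j i k := by
  simp only [Ccoef_eq, Cconst_eq, if_pos rfl, if_neg hl, add_zero, zero_add,
    mul_sub, mul_add, Finset.sum_sub_distrib, Finset.sum_add_distrib, Finset.mul_sum,
    mul_ite, mul_zero, Finset.sum_ite_eq, Finset.sum_ite_eq', Finset.mem_univ, if_true]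

  have hS1 : ∑ x : Fin d, p x i j * p0 x k = ∑ m : Fin d, p m i j * p0 k m :=
    Finset.sum_congr rfl fun x _ => by rw [hp0 x k]
  have hS2 : ∑ x : Fin d, p x j k * p0 i x = ∑ m : Fin d, p m k j * p0 i m :=
    Finset.sum_congr rfl fun x _ => by rw [hp x j k]
  have h0 : p0 k j = p0 j k := hp0 k j
  have h1 : ∑ x : Fin d, ∑ n : Fin d, p l x l * (p n i j * p x k n)
      = ∑ x : Fin d, ∑ n : Fin d, p x i j * (p n x k * p l l n) :=
    (Finset.sum_comm).trans (Finset.sum_congr rfl fun a _ => Finset.sum_congr rfl fun b _ => by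
      rw [hp b k a, hp l b l]; ring)
  have h2 : ∑ x : Fin d, ∑ n : Fin d, p x k l * (p n i j * p l x n)
      = ∑ x : Fin d, ∑ n : Fin d, p x i j * (p n l k * p l x n) :=
    (Finset.sum_comm).trans (Finset.sum_congr rfl fun a _ => Finset.sum_congr rfl fun b _ => by
      rw [hp b k l, hp l b a]; ring)
  have h3 : ∑ x : Fin d, ∑ n : Fin d, p l x l * (p n k j * p x i n)
      = ∑ x : Fin d, ∑ n : Fin d, p x j k * (p n i x * p l l n) :=
    (Finset.sum_comm).trans (Finset.sum_congr rfl fun a _ => Finset.sum_congr rfl fun b _ => by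
      rw [hp a k j, hp l b l]; ring)
  have h4 : ∑ x : Fin d, ∑ n : Fin d, p x j k * (p n l x * p l i n)
      = ∑ x : Fin d, ∑ n : Fin d, p l i x * (p n j k * p x l n) :=
    (Finset.sum_comm).trans (Finset.sum_congr rfl fun a _ => Finset.sum_congr rfl fun b _ => by
      ring)
  have h5 : ∑ x : Fin d, ∑ n : Fin d, p x k l * (p n x j * p l i n)
      = ∑ x : Fin d, ∑ n : Fin d, p l i x * (p n l k * p x j n) :=
    (Finset.sum_comm).trans (Finset.sum_congr rfl fun a _ => Finset.sum_congr rfl fun b _ => by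
      rw [hp b k l, hp a b j]; ring)
  linear_combination (-1 : A) * hS1 + hS2 + h1 - h2 - h3 - h4 + h5 - p l i l * h0


/-- Each constant-term coefficient `C(0;j,(i,k))` lies in the ideal generated by the
coefficients `C(a;b,(e,f))` of the `x_a` with `1 ≤ a ≤ d`. -/
theorem stmt_9 (d : ℕ) (p0 : Fin d → Fin d → A) (p : Fin d → Fin d → Fin d → A)
    (hp0 : ∀ i j, p0 i j = p0 j i) (hp : ∀ r s t, p r s t = p r t s)
    (j i k : Fin d) :
    Cconst d p0 p j i k ∈
      Ideal.span {x : A | ∃ a b e f : Fin d, x = Ccoef d p0 p a b e f} := by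
  rcases eq_or_ne i k with rfl | hik
  · have h0 : Cconst d p0 p j i i = 0 := by rw [Cconst_eq]; ring
    rw [h0]; exact Ideal.zero_mem _
  · rw [key d p0 p hp0 hp j i k k hik.symm]
    have mem : ∀ a b e f : Fin d, Ccoef d p0 p a b e f ∈
        Ideal.span {x : A | ∃ a b e f : Fin d, x = Ccoef d p0 p a b e f} :=
      fun a b e f => Ideal.subset_span ⟨a, b, e, f, rfl⟩
    exact sub_mem (sub_mem (add_mem (sub_mem
      (Ideal.sum_mem _ fun m _ => Ideal.mul_mem_left _ _ (mem _ _ _ _))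
      (Ideal.sum_mem _ fun m _ => Ideal.mul_mem_left _ _ (mem _ _ _ _)))
      (Ideal.sum_mem _ fun m _ => Ideal.mul_mem_left _ _ (mem _ _ _ _)))
      (Ideal.sum_mem _ fun m _ => Ideal.mul_mem_left _ _ (mem _ _ _ _)))
      (Ideal.sum_mem _ fun m _ => Ideal.mul_mem_left _ _ (mem _ _ _ _))
end
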